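/- For the recurrence f_m = (f_{m-1}^r + 1)/f_{m-2} with integer r ≥ 3 and f_0 = X, f_1 = Y, the denominators q_m of the Laurent-polynomial iterates satisfy q_m = q_{m-1}^r / q_{m-2} (with q_2 = X, q_3 = X^r Y), so that deg q_m grows like λ^m with λ = (r + √(r²−4))/2; hence the algebraic entropy of the equation equals log λ > 0. -/

import Mathlib

open MvPolynomial Filter Real

set_option maxHeartbeats 1000000

noncomputable section AuxEntropy


noncomputable def homz : MvPolynomial (Fin 2) ℝ →+* Polynomial (MvPolynomial (Fin 2) ℝ) :=
  eval₂Hom (Polynomial.C.comp MvPolynomial.C) (fun i => Polynomial.C (X i) * Polynomial.X)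

lemma homz_monomial (d : Fin 2 →₀ ℕ) (c : ℝ) :
    homz (monomial d c) = Polynomial.C (monomial d c) * Polynomial.X ^ d.degree := by
  simp only [homz, eval₂Hom_monomial, RingHom.coe_comp, Function.comp_apply]
  rw [monomial_eq, Finsupp.degree_apply]
  simp only [mul_pow, Finsupp.prod, Finset.prod_mul_distrib, map_prod, map_pow,
    Finset.prod_pow_eq_pow_sum, map_mul]
  ring

lemma homz_coeff (p : MvPolynomial (Fin 2) ℝ) (k : ℕ) :
    (homz p).coeff k = homogeneousComponent k p := by
  induction p using MvPolynomial.induction_on' with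
  | monomial d c =>
    rw [homz_monomial, Polynomial.coeff_C_mul, Polynomial.coeff_X_pow]
    rcases eq_or_ne c 0 with rfl | hc
    · simp
    rw [homogeneousComponent_of_mem (isHomogeneous_monomial c rfl)]
    by_cases h : d.degree = k <;> simp [h, eq_comm]
  | add p q hp hq => simp [map_add, Polynomial.coeff_add, hp, hq]

lemma hc_top_ne_zero {p : MvPolynomial (Fin 2) ℝ} (hp : p ≠ 0) :
    homogeneousComponent p.totalDegree p ≠ 0 := by
  obtain ⟨d, hd, hdeg⟩ := p.support.exists_mem_eq_sup
    (support_nonempty.mpr hp) (fun m => m.sum fun _ e => e)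
  intro h
  have hc : coeff d (homogeneousComponent p.totalDegree p) = coeff d p := by
    rw [coeff_homogeneousComponent, if_pos]
    rw [totalDegree, hdeg]; rfl
  rw [h, coeff_zero] at hc
  exact (mem_support_iff.mp hd) hc.symm

lemma homz_ne_zero {p : MvPolynomial (Fin 2) ℝ} (hp : p ≠ 0) : homz p ≠ 0 := by
  intro h
  apply hc_top_ne_zero hp
  rw [← homz_coeff, h, Polynomial.coeff_zero]

lemma natDegree_homz {p : MvPolynomial (Fin 2) ℝ} (hp : p ≠ 0) :
    (homz p).natDegree = p.totalDegree := by
  apply le_antisymm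
  · apply Polynomial.natDegree_le_iff_coeff_eq_zero.mpr
    intro k hk
    rw [homz_coeff, homogeneousComponent_eq_zero _ _ hk]
  · apply Polynomial.le_natDegree_of_ne_zero
    rw [homz_coeff]
    exact hc_top_ne_zero hp

lemma totalDegree_mul_eq' {p q : MvPolynomial (Fin 2) ℝ} (hp : p ≠ 0) (hq : q ≠ 0) :
    (p * q).totalDegree = p.totalDegree + q.totalDegree := by
  rw [← natDegree_homz (mul_ne_zero hp hq), map_mul,
    Polynomial.natDegree_mul (homz_ne_zero hp) (homz_ne_zero hq),
    natDegree_homz hp, natDegree_homz hq]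

lemma totalDegree_pow_eq' {p : MvPolynomial (Fin 2) ℝ} (hp : p ≠ 0) (n : ℕ) :
    (p ^ n).totalDegree = n * p.totalDegree := by
  rw [← natDegree_homz (pow_ne_zero n hp), map_pow, Polynomial.natDegree_pow,
    natDegree_homz hp]

lemma prime_X0 : Prime (X 0 : MvPolynomial (Fin 2) ℝ) := by
  rw [← MulEquiv.prime_iff (MvPolynomial.finSuccEquiv ℝ 1).toRingEquiv.toMulEquiv]
  show Prime (MvPolynomial.finSuccEquiv ℝ 1 (X 0))
  rw [finSuccEquiv_X_zero]
  exact Polynomial.prime_X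

lemma prime_X1 : Prime (X 1 : MvPolynomial (Fin 2) ℝ) := by
  have := (MulEquiv.prime_iff
    (MvPolynomial.renameEquiv ℝ (Equiv.swap (0:Fin 2) 1)).toRingEquiv.toMulEquiv).mpr prime_X0
  have h2 : (MvPolynomial.renameEquiv ℝ (Equiv.swap (0:Fin 2) 1)).toRingEquiv.toMulEquiv (X 0)
      = (X 1 : MvPolynomial (Fin 2) ℝ) := by
    show rename (Equiv.swap (0:Fin 2) 1) (X 0) = X 1
    simp
  rwa [h2] at this


def lin (r u v : ℕ) : ℕ → ℕ
  | 0 => u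
  | 1 => v
  | (n+2) => r * lin r u v (n+1) - lin r u v n

lemma lin_facts {r u v : ℕ} (hr : 3 ≤ r) (huv : u ≤ v) (hu : 1 ≤ u) :
    ∀ n, lin r u v n ≤ lin r u v (n+1) ∧ 1 ≤ lin r u v n := by
  intro n
  induction n with
  | zero => exact ⟨huv, hu⟩
  | succ n ih =>
    have h3 : 3 * lin r u v (n+1) ≤ r * lin r u v (n+1) :=
      Nat.mul_le_mul_right _ hr
    have he : lin r u v (n+1+1) = r * lin r u v (n+1) - lin r u v n := rfl
    omega

lemma lin_rec {r u v : ℕ} (hr : 3 ≤ r) (huv : u ≤ v) (hu : 1 ≤ u) (n : ℕ) :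
    lin r u v (n+2) + lin r u v n = r * lin r u v (n+1) := by
  have h1 := lin_facts hr huv hu n
  have h3 : 3 * lin r u v (n+1) ≤ r * lin r u v (n+1) := Nat.mul_le_mul_right _ hr
  have h4 := (lin_facts hr huv hu n).1
  have he : lin r u v (n+2) = r * lin r u v (n+1) - lin r u v n := rfl
  omega

/-- exponent of X0 in q (n+2) -/
def Aexp (r : ℕ) : ℕ → ℕ := lin r 1 r
/-- exponent of X1 in q (n+2) -/
def Bexp (r : ℕ) : ℕ → ℕ := fun n => lin r 0 1 n

lemma Bexp_succ (r : ℕ) : ∀ n, Bexp r (n+1) = Aexp r n := by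
  have key : ∀ n, lin r 0 1 (n+1) = lin r 1 r n ∧ lin r 0 1 (n+2) = lin r 1 r (n+1) := by
    intro n
    induction n with
    | zero => exact ⟨rfl, by show r * 1 - 0 = r; omega⟩
    | succ n ih =>
      refine ⟨ih.2, ?_⟩
      show r * lin r 0 1 (n+2) - lin r 0 1 (n+1) = r * lin r 1 r (n+1) - lin r 1 r n
      rw [ih.1, ih.2]
  exact fun n => (key n).1

lemma Aexp_rec (r : ℕ) (hr : 3 ≤ r) (n : ℕ) :
    Aexp r (n+2) + Aexp r n = r * Aexp r (n+1) := lin_rec hr (by omega) le_rfl n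

lemma Aexp_pos (r : ℕ) (hr : 3 ≤ r) (n : ℕ) : 1 ≤ Aexp r n :=
  (lin_facts hr (by omega) le_rfl n).2

lemma Bexp_rec (r : ℕ) (hr : 3 ≤ r) (n : ℕ) :
    Bexp r (n+2) + Bexp r n = r * Bexp r (n+1) := by
  cases n with
  | zero => show Bexp r 2 + 0 = r * Bexp r 1
            rw [Bexp_succ, Bexp_succ]; show Aexp r 1 + 0 = r * Aexp r 0
            show r + 0 = r * 1; omega
  | succ n => rw [Bexp_succ, Bexp_succ, Bexp_succ]; exact Aexp_rec r hr n

lemma Bexp_pos (r : ℕ) (hr : 3 ≤ r) (n : ℕ) : 1 ≤ Bexp r (n+1) := by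
  rw [Bexp_succ]; exact Aexp_pos r hr n

lemma Aexp_zero (r : ℕ) : Aexp r 0 = 1 := rfl
lemma Aexp_one (r : ℕ) : Aexp r 1 = r := rfl
lemma Bexp_zero (r : ℕ) : Bexp r 0 = 0 := rfl
lemma Bexp_one (r : ℕ) : Bexp r 1 = 1 := rfl


lemma entropy_limit (r : ℕ) (hr : 3 ≤ r) (d : ℕ → ℕ)
    (h2 : d 2 = r) (h3 : d 3 = r ^ 2)
    (hrec : ∀ n : ℕ, d (n + 4) + d (n + 2) = r * d (n + 3)) :
    Tendsto (fun m : ℕ => Real.log (d m : ℝ) / m) atTop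
      (nhds (Real.log (((r : ℝ) + Real.sqrt ((r : ℝ) ^ 2 - 4)) / 2))) ∧
    0 < Real.log (((r : ℝ) + Real.sqrt ((r : ℝ) ^ 2 - 4)) / 2) := by
  have hr3 : (3 : ℝ) ≤ (r : ℝ) := by exact_mod_cast hr
  have h4 : (4 : ℝ) ≤ (r : ℝ) ^ 2 := by nlinarith
  set s : ℝ := Real.sqrt ((r : ℝ) ^ 2 - 4) with hs
  have hs0 : 0 ≤ s := Real.sqrt_nonneg _
  have hs2 : s ^ 2 = (r : ℝ) ^ 2 - 4 := Real.sq_sqrt (by linarith)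
  have hsr : s < r := by nlinarith
  set L : ℝ := ((r : ℝ) + s) / 2 with hL
  set M : ℝ := ((r : ℝ) - s) / 2 with hM
  have hLM : L * M = 1 := by rw [hL, hM]; nlinarith
  have hLMr : L + M = r := by rw [hL, hM]; ring
  have hM0 : 0 < M := by rw [hM]; linarith
  have hL1 : 1 < L := by rw [hL]; linarith
  have hL0 : 0 < L := by linarith
  have hM1 : M < 1 := by nlinarith
  have hlogL : 0 < Real.log L := Real.log_pos hL1
  refine ⟨?_, hlogL⟩
  -- real version of the sequence, shifted: E n = d (n+2)
  set E : ℕ → ℝ := fun n => (d (n + 2) : ℝ) with hE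
  have hE0 : E 0 = r := by simp [hE, h2]
  have hE1 : E 1 = (r : ℝ) ^ 2 := by simp [hE, h3]
  have hEnn : ∀ n, 0 ≤ E n := fun n => Nat.cast_nonneg _
  have hErec : ∀ n, E (n + 2) = r * E (n + 1) - E n := by
    intro n
    have := hrec n
    have : ((d (n+4) : ℝ)) + d (n+2) = r * d (n+3) := by exact_mod_cast this
    simp only [hE]
    have e1 : n + 2 + 2 = n + 4 := by ring
    have e2 : n + 1 + 2 = n + 3 := by ring
    rw [e1, e2]; linarith
  -- the key closed-form step
  have claim1 : ∀ n, E (n + 1) = M * E n + r * L ^ (n + 1) := by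
    intro n
    induction n with
    | zero =>
      rw [hE0, hE1, pow_one]
      nlinarith [hLMr, hLM]
    | succ n ih =>
      have hrLM : (r : ℝ) = L + M := hLMr.symm
      calc E (n+1+1) = (L+M) * E (n+1) - E n := by rw [hErec n, ← hrLM]
        _ = M * E (n+1) + L * (M * E n + ↑r * L ^ (n+1)) - E n := by rw [← ih]; ring
        _ = M * E (n+1) + (L*M) * E n + ↑r * (L * L^(n+1)) - E n := by ring
        _ = M * E (n+1) + ↑r * L ^ (n+1+1) := by rw [hLM]; ring
  have lower : ∀ n, (r : ℝ) * L ^ n ≤ E n := by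
    intro n
    cases n with
    | zero => simp [hE0]
    | succ n =>
      rw [claim1 n]
      nlinarith [hEnn n, hM0.le, pow_pos hL0 (n+1)]
  set C : ℝ := (r : ℝ) * L ^ 2 / (L ^ 2 - 1) with hC
  have hL2 : 0 < L ^ 2 - 1 := by nlinarith
  have hCr : C * (L ^ 2 - 1) = r * L ^ 2 := by rw [hC]; field_simp
  have hC0 : 0 < C := by
    rw [hC]; positivity
  have upper : ∀ n, E n ≤ C * L ^ n := by
    intro n
    induction n with
    | zero =>
      rw [hE0]; simp only [pow_zero, mul_one]
      nlinarith [pow_pos hL0 2]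
    | succ n ih =>
      rw [claim1 n]
      have key : M * (C * L ^ n) + r * L ^ (n + 1) = C * L ^ (n + 1) := by
        have hML : M * L = 1 := by linarith [hLM, mul_comm L M]
        have expand : (M * (C * L ^ n) + r * L ^ (n + 1)) * L
            = (C * L ^ (n + 1)) * L := by
          have e : L ^ (n+1) * L = L^2 * L^n := by ring
          calc (M * (C * L ^ n) + r * L ^ (n + 1)) * L
              = (M * L) * C * L ^ n + r * (L ^ (n+1) * L) := by ring
            _ = C * L ^ n + r * (L^2 * L^n) := by rw [hML, e]; ring
            _ = C * L ^ n + (C * (L^2 - 1)) * L^n := by rw [hCr]; ring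
            _ = (C * L ^ (n + 1)) * L := by ring
        exact mul_right_cancel₀ (ne_of_gt hL0) expand
      calc M * E n + r * L ^ (n+1) ≤ M * (C * L ^ n) + r * L ^ (n+1) := by
            nlinarith [hM0.le]
        _ = C * L ^ (n+1) := key
  -- now the squeeze
  have hEpos : ∀ n, 0 < E n := fun n =>
    lt_of_lt_of_le (by positivity) (lower n)
  have hlow : ∀ᶠ m : ℕ in atTop,
      Real.log L + (Real.log r - 2 * Real.log L) / m ≤ Real.log (d m : ℝ) / m := by
    filter_upwards [eventually_ge_atTop 2] with m hm
    have hm0 : (0 : ℝ) < m := by positivity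
    have hd : (d m : ℝ) = E (m - 2) := by simp [hE, Nat.sub_add_cancel hm]
    have hlog : Real.log r + ((m : ℝ) - 2) * Real.log L ≤ Real.log (d m : ℝ) := by
      rw [hd]
      calc Real.log r + ((m : ℝ) - 2) * Real.log L
          = Real.log ((r : ℝ) * L ^ (m - 2)) := by
            rw [Real.log_mul (by positivity) (by positivity), Real.log_pow]
            have : ((m - 2 : ℕ) : ℝ) = (m : ℝ) - 2 := by
              rw [Nat.cast_sub hm]; norm_num
            rw [this]
        _ ≤ Real.log (E (m - 2)) :=
            Real.log_le_log (by positivity) (lower (m - 2))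
    rw [le_div_iff₀ hm0]
    calc (Real.log L + (Real.log r - 2 * Real.log L) / m) * m
        = Real.log r + ((m : ℝ) - 2) * Real.log L := by field_simp; ring
      _ ≤ Real.log (d m : ℝ) := hlog
  have hhigh : ∀ᶠ m : ℕ in atTop,
      Real.log (d m : ℝ) / m ≤ Real.log L + (Real.log C - 2 * Real.log L) / m := by
    filter_upwards [eventually_ge_atTop 2] with m hm
    have hm0 : (0 : ℝ) < m := by positivity
    have hd : (d m : ℝ) = E (m - 2) := by simp [hE, Nat.sub_add_cancel hm]
    have hlog : Real.log (d m : ℝ) ≤ Real.log C + ((m : ℝ) - 2) * Real.log L := by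
      rw [hd]
      calc Real.log (E (m - 2)) ≤ Real.log (C * L ^ (m - 2)) :=
            Real.log_le_log (hEpos _) (upper (m - 2))
        _ = Real.log C + ((m : ℝ) - 2) * Real.log L := by
            rw [Real.log_mul (ne_of_gt hC0) (by positivity), Real.log_pow]
            have : ((m - 2 : ℕ) : ℝ) = (m : ℝ) - 2 := by
              rw [Nat.cast_sub hm]; norm_num
            rw [this]
    rw [div_le_iff₀ hm0]
    calc Real.log (d m : ℝ) ≤ Real.log C + ((m : ℝ) - 2) * Real.log L := hlog
      _ = (Real.log L + (Real.log C - 2 * Real.log L) / m) * m := by field_simp; ring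
  have hlim1 : Tendsto (fun m : ℕ => Real.log L + (Real.log r - 2 * Real.log L) / m)
      atTop (nhds (Real.log L)) := by
    have := tendsto_const_div_atTop_nhds_zero_nat (Real.log r - 2 * Real.log L)
    have h := (tendsto_const_nhds :
      Filter.Tendsto (fun _ : ℕ => Real.log L) atTop (nhds (Real.log L))).add this
    simpa using h
  have hlim2 : Tendsto (fun m : ℕ => Real.log L + (Real.log C - 2 * Real.log L) / m)
      atTop (nhds (Real.log L)) := by
    have := tendsto_const_div_atTop_nhds_zero_nat (Real.log C - 2 * Real.log L)
    have h := (tendsto_const_nhds :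
      Filter.Tendsto (fun _ : ℕ => Real.log L) atTop (nhds (Real.log L))).add this
    simpa using h
  exact tendsto_of_tendsto_of_tendsto_of_le_of_le' hlim1 hlim2 hlow hhigh

lemma aux_unit {p : MvPolynomial (Fin 2) ℝ} (hp0 : ¬ X 0 ∣ p) (hp1 : ¬ X 1 ∣ p)
    {a b : ℕ} {d : MvPolynomial (Fin 2) ℝ}
    (hdp : d ∣ p) (hdm : d ∣ X 0 ^ a * X 1 ^ b) : IsUnit d := by
  by_contra hu
  have hd0 : d ≠ 0 := by
    rintro rfl
    have : (X 0 ^ a * X 1 ^ b : MvPolynomial (Fin 2) ℝ) = 0 := zero_dvd_iff.mp hdm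
    exact (mul_ne_zero (pow_ne_zero _ (X_ne_zero _)) (pow_ne_zero _ (X_ne_zero _))) this
  obtain ⟨pp, hπirr, hπd⟩ := WfDvdMonoid.exists_irreducible_factor hu hd0
  have hπ : Prime pp := (UniqueFactorizationMonoid.irreducible_iff_prime).mp hπirr
  have hπm : pp ∣ X 0 ^ a * X 1 ^ b := hπd.trans hdm
  have hX : pp ∣ (X 0 : MvPolynomial (Fin 2) ℝ) ∨ pp ∣ (X 1 : MvPolynomial (Fin 2) ℝ) := by
    rcases hπ.dvd_or_dvd hπm with h | h
    · exact Or.inl (hπ.dvd_of_dvd_pow h)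
    · exact Or.inr (hπ.dvd_of_dvd_pow h)
  rcases hX with h | h
  · obtain ⟨c, hc⟩ := h
    rcases prime_X0.irreducible.isUnit_or_isUnit hc with h' | h'
    · exact hπirr.not_isUnit h'
    · apply hp0
      have : X 0 ∣ pp := ⟨(h'.unit⁻¹ : _), by
        rw [hc]; rw [mul_assoc]; simp [IsUnit.mul_val_inv]⟩
      exact (this.trans hπd).trans hdp
  · obtain ⟨c, hc⟩ := h
    rcases prime_X1.irreducible.isUnit_or_isUnit hc with h' | h'
    · exact hπirr.not_isUnit h'
    · apply hp1
      have : X 1 ∣ pp := ⟨(h'.unit⁻¹ : _), by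
        rw [hc]; rw [mul_assoc]; simp [IsUnit.mul_val_inv]⟩
      exact (this.trans hπd).trans hdp

lemma relprime_monomial {p : MvPolynomial (Fin 2) ℝ} (hp0 : ¬ X 0 ∣ p) (hp1 : ¬ X 1 ∣ p)
    (a b : ℕ) : IsRelPrime p (X 0 ^ a * X 1 ^ b) :=
  fun _ hdp hdm => aux_unit hp0 hp1 hdp hdm

lemma div_key {r : ℕ} (hr : 1 ≤ r) {pn pn1 pm1 pm2 qn qn1 qm1 : MvPolynomial (Fin 2) ℝ}
    {a b : ℕ} (hqm1 : qm1 = X 0 ^ a * X 1 ^ b)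
    (h1 : pn1 * pm1 = pn ^ r + qn ^ r)
    (h2 : pn * pm2 = pm1 ^ r + qm1 ^ r)
    (h3 : qn1 * qm1 = qn ^ r)
    (hnd0 : ¬ X 0 ∣ pn) (hnd1 : ¬ X 1 ∣ pn) :
    pn ∣ pn1 ^ r + qn1 ^ r := by
  have hrel_qm1 : IsRelPrime pn qm1 := hqm1 ▸ relprime_monomial hnd0 hnd1 a b
  have hrel_pm1 : IsRelPrime pn pm1 := by
    intro d hdpn hdpm1
    have hd1 : d ∣ qm1 ^ r := by
      have : qm1 ^ r = pn * pm2 - pm1 ^ r := by rw [h2]; ring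
      rw [this]
      exact dvd_sub (hdpn.mul_right _) (dvd_pow hdpm1 (by omega))
    have : qm1 ^ r = X 0 ^ (r * a) * X 1 ^ (r * b) := by
      rw [hqm1]; rw [mul_pow, ← pow_mul, ← pow_mul, mul_comm a r, mul_comm b r]
    exact aux_unit hnd0 hnd1 hdpn (this ▸ hd1)
  have key : pn ∣ (pn1 ^ r + qn1 ^ r) * (pm1 * qm1) ^ r := by
    have e1 : (pn1 ^ r + qn1 ^ r) * (pm1 * qm1) ^ r
        = ((pn1 * pm1) ^ r - (qn ^ r) ^ r) * qm1 ^ r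
          + ((qn1 * qm1) ^ r - (qn ^ r) ^ r) * pm1 ^ r
          + (qn ^ r) ^ r * (pm1 ^ r + qm1 ^ r) := by ring
    rw [e1, h3, sub_self, zero_mul, add_zero, ← h2]
    apply dvd_add
    · apply dvd_mul_of_dvd_left
      have hsub : pn1 * pm1 - qn ^ r = pn ^ r := by rw [h1]; ring
      exact ((hsub ▸ dvd_pow_self pn (by omega : r ≠ 0)).trans
        (sub_dvd_pow_sub_pow (pn1 * pm1) (qn ^ r) r))
    · exact Dvd.dvd.mul_left (Dvd.dvd.mul_right (dvd_refl pn) _) _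
  have hrel : IsRelPrime pn ((pm1 * qm1) ^ r) := (hrel_pm1.mul_right hrel_qm1).pow_right
  exact hrel.dvd_of_dvd_mul_right key

noncomputable abbrev K2 := FractionRing (MvPolynomial (Fin 2) ℝ)
noncomputable abbrev φm : MvPolynomial (Fin 2) ℝ →+* K2 :=
  (algebraMap (MvPolynomial (Fin 2) ℝ) K2 : _ →+* K2)

lemma phi_inj : Function.Injective φm := IsFractionRing.injective _ _

lemma phi_ne_zero {p : MvPolynomial (Fin 2) ℝ} (h : p ≠ 0) : φm p ≠ 0 := by
  intro h'
  exact h (phi_inj (by simpa using h'))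

noncomputable def Qq (r : ℕ) (n : ℕ) : MvPolynomial (Fin 2) ℝ :=
  X 0 ^ (Aexp r n) * X 1 ^ (Bexp r n)

lemma Qq_ne_zero (r n : ℕ) : Qq r n ≠ 0 :=
  mul_ne_zero (pow_ne_zero _ (X_ne_zero _)) (pow_ne_zero _ (X_ne_zero _))

lemma Qq_zero (r : ℕ) : Qq r 0 = X 0 := by
  rw [Qq, Aexp_zero, Bexp_zero, pow_one, pow_zero, mul_one]

lemma Qq_one (r : ℕ) : Qq r 1 = X 0 ^ r * X 1 := by
  rw [Qq, Aexp_one, Bexp_one, pow_one]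

lemma Qq_rec (r : ℕ) (hr : 3 ≤ r) (n : ℕ) :
    Qq r (n + 2) * Qq r n = Qq r (n + 1) ^ r := by
  rw [Qq, Qq, Qq, mul_pow, ← pow_mul, ← pow_mul, mul_comm (Aexp r (n+1)) r,
    mul_comm (Bexp r (n+1)) r, ← Aexp_rec r hr n, ← Bexp_rec r hr n, pow_add, pow_add]
  ring

section Main

variable {r : ℕ} (hr : 3 ≤ r) (f : ℕ → K2)
  (h0 : f 0 = φm (X 0)) (h1 : f 1 = φm (X 1))
  (hne : ∀ m, f m ≠ 0)
  (hrec : ∀ m, f (m + 2) * f m = f (m + 1) ^ r + 1)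

set_option linter.unusedSectionVars false in
include hr h0 h1 hne hrec in
lemma base0 : f 2 * φm (Qq r 0) = φm (X 1 ^ r + 1) := by
  rw [Qq_zero, ← h0, hrec 0, h1, map_add, map_pow, map_one]

set_option linter.unusedSectionVars false in
include hr h0 h1 hne hrec in
lemma base1 : f 3 * φm (Qq r 1) = φm ((X 1 ^ r + 1) ^ r + X 0 ^ r) := by
  have hb0 := base0 hr f h0 h1 hne hrec
  rw [Qq_zero] at hb0
  have hpow : f 2 ^ r * φm (X 0) ^ r = φm (X 1 ^ r + 1) ^ r := by
    rw [← mul_pow, hb0]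
  have h3 : f 3 * f 1 = f 2 ^ r + 1 := hrec 1
  rw [Qq_one, map_mul, map_pow]
  calc f 3 * (φm (X 0) ^ r * φm (X 1))
      = (f 3 * f 1) * φm (X 0) ^ r := by rw [← h1]; ring
    _ = (f 2 ^ r + 1) * φm (X 0) ^ r := by rw [h3]
    _ = f 2 ^ r * φm (X 0) ^ r + φm (X 0) ^ r := by ring
    _ = φm ((X 1 ^ r + 1) ^ r + X 0 ^ r) := by rw [hpow]; simp

/-- not divisible by X i : via evaluation at 0 -/
lemma notdvd0 {p : MvPolynomial (Fin 2) ℝ} (h : eval (fun _ => (0:ℝ)) p ≠ 0) :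
    (¬ X 0 ∣ p) ∧ ¬ X 1 ∣ p := by
  constructor <;> rintro ⟨c, rfl⟩ <;> apply h <;> simp

set_option linter.unusedSectionVars false in
include hr h0 h1 hne hrec in
lemma rel_of_good {k : ℕ} {Pk Pk1 Pk2 : MvPolynomial (Fin 2) ℝ}
    (gk : f (k + 2) * φm (Qq r k) = φm Pk)
    (gk1 : f (k + 3) * φm (Qq r (k + 1)) = φm Pk1)
    (gk2 : f (k + 4) * φm (Qq r (k + 2)) = φm Pk2) :
    Pk2 * Pk = Pk1 ^ r + Qq r (k + 1) ^ r := by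
  apply phi_inj
  have hq := Qq_rec r hr k
  have hf : f (k + 4) * f (k + 2) = f (k + 3) ^ r + 1 := hrec (k + 2)
  calc φm (Pk2 * Pk) = (f (k+4) * φm (Qq r (k+2))) * (f (k+2) * φm (Qq r k)) := by
        rw [map_mul, gk, gk2]
    _ = (f (k+4) * f (k+2)) * φm (Qq r (k+2) * Qq r k) := by rw [map_mul]; ring
    _ = (f (k+3) ^ r + 1) * φm (Qq r (k+1)) ^ r := by rw [hf, hq, map_pow]
    _ = (f (k+3) * φm (Qq r (k+1))) ^ r + φm (Qq r (k+1)) ^ r := by ring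
    _ = φm (Pk1 ^ r + Qq r (k+1) ^ r) := by rw [gk1, map_add, map_pow, map_pow]

include hr h0 h1 hne hrec in
lemma main_exists : ∀ n : ℕ, ∃ P : MvPolynomial (Fin 2) ℝ,
    f (n + 2) * φm (Qq r n) = φm P ∧ ¬ X 0 ∣ P ∧ ¬ X 1 ∣ P := by
  have hr0 : r ≠ 0 := by omega
  have hP0nd : (¬ X 0 ∣ (X 1 ^ r + 1 : MvPolynomial (Fin 2) ℝ))
      ∧ ¬ X 1 ∣ (X 1 ^ r + 1 : MvPolynomial (Fin 2) ℝ) := by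
    apply notdvd0; simp [zero_pow hr0]
  have hP1nd : (¬ X 0 ∣ ((X 1 ^ r + 1) ^ r + X 0 ^ r : MvPolynomial (Fin 2) ℝ))
      ∧ ¬ X 1 ∣ ((X 1 ^ r + 1) ^ r + X 0 ^ r : MvPolynomial (Fin 2) ℝ) := by
    apply notdvd0; simp [zero_pow hr0]
  intro n
  induction n using Nat.strong_induction_on with
  | _ n ih =>
    match n with
    | 0 => exact ⟨X 1 ^ r + 1, base0 hr f h0 h1 hne hrec, hP0nd⟩
    | 1 => exact ⟨(X 1 ^ r + 1) ^ r + X 0 ^ r, base1 hr f h0 h1 hne hrec, hP1nd⟩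
    | (k + 2) =>
      obtain ⟨Pk, gk, ndk0, ndk1⟩ := ih k (by omega)
      obtain ⟨Pk1, gk1, nd10, nd11⟩ := ih (k+1) (by omega)
      -- key divisibility
      have hdvd : Pk ∣ Pk1 ^ r + Qq r (k + 1) ^ r := by
        match k with
        | 0 =>
          -- identify Pk, Pk1 with explicit polynomials
          have ek : Pk = X 1 ^ r + 1 :=
            phi_inj (by rw [← gk, base0 hr f h0 h1 hne hrec])
          have ek1 : Pk1 = (X 1 ^ r + 1) ^ r + X 0 ^ r :=
            phi_inj (by rw [← gk1, base1 hr f h0 h1 hne hrec])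
          subst ek ek1
          have d1 : (X 1 ^ r + 1 : MvPolynomial (Fin 2) ℝ) ∣
              ((X 1 ^ r + 1) ^ r + X 0 ^ r) ^ r - (X 0 ^ r) ^ r := by
            have hsub : ((X 1 ^ r + 1) ^ r + X 0 ^ r) - X 0 ^ r
                = (X 1 ^ r + 1 : MvPolynomial (Fin 2) ℝ) ^ r := by ring
            exact (hsub ▸ dvd_pow_self _ hr0).trans
              (sub_dvd_pow_sub_pow _ _ r)
          have e2 : ((X 1 ^ r + 1) ^ r + X 0 ^ r : MvPolynomial (Fin 2) ℝ) ^ r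
                + Qq r 1 ^ r
              = (((X 1 ^ r + 1) ^ r + X 0 ^ r) ^ r - (X 0 ^ r) ^ r)
                + (X 0 ^ r) ^ r * (X 1 ^ r + 1) := by
            rw [Qq_one]; ring
          rw [e2]
          exact dvd_add d1 (dvd_mul_left _ _)
        | 1 =>
          obtain ⟨P0, g0, _, _⟩ := ih 0 (by omega)
          have e0 : P0 = X 1 ^ r + 1 :=
            phi_inj (by rw [← g0, base0 hr f h0 h1 hne hrec])
          have ek : Pk = (X 1 ^ r + 1) ^ r + X 0 ^ r :=
            phi_inj (by rw [← gk, base1 hr f h0 h1 hne hrec])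
          have h1' : Pk1 * P0 = Pk ^ r + Qq r 1 ^ r :=
            rel_of_good hr f h0 h1 hne hrec g0 gk gk1
          have h2' : Pk * 1 = P0 ^ r + Qq r 0 ^ r := by
            rw [mul_one, ek, e0, Qq_zero]
          have h3' : Qq r 2 * Qq r 0 = Qq r 1 ^ r := Qq_rec r hr 0
          have hq0 : Qq r 0 = X 0 ^ 1 * X 1 ^ 0 := by rw [Qq_zero]; simp
          exact div_key (by omega) hq0 h1' h2' h3' ndk0 ndk1
        | (j + 2) =>
          obtain ⟨Pm1, gm1, _, _⟩ := ih (j+1) (by omega)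
          obtain ⟨Pm2, gm2, _, _⟩ := ih j (by omega)
          have h1' : Pk1 * Pm1 = Pk ^ r + Qq r (j + 2) ^ r :=
            rel_of_good hr f h0 h1 hne hrec gm1 gk gk1
          have h2' : Pk * Pm2 = Pm1 ^ r + Qq r (j + 1) ^ r :=
            rel_of_good hr f h0 h1 hne hrec gm2 gm1 gk
          have h3' : Qq r (j + 3) * Qq r (j + 1) = Qq r (j + 2) ^ r := Qq_rec r hr (j+1)
          exact div_key (by omega) rfl h1' h2' h3' ndk0 ndk1
      obtain ⟨c, hc⟩ := hdvd
      refine ⟨c, ?_, ?_, ?_⟩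
      · -- the field identity
        have hPk_ne : φm Pk ≠ 0 := by
          rw [← gk]
          exact mul_ne_zero (hne _) (phi_ne_zero (Qq_ne_zero r k))
        apply mul_right_cancel₀ hPk_ne
        have hq := Qq_rec r hr k
        have hf : f (k + 4) * f (k + 2) = f (k + 3) ^ r + 1 := hrec (k + 2)
        calc f (k + 2 + 2) * φm (Qq r (k+2)) * φm Pk
            = (f (k+4) * f (k+2)) * (φm (Qq r (k+2)) * φm (Qq r k)) := by
              rw [← gk]; ring
          _ = (f (k+3) ^ r + 1) * φm (Qq r (k+1)) ^ r := by
              rw [hf, ← map_mul, hq, map_pow]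
          _ = (f (k+3) * φm (Qq r (k+1))) ^ r + φm (Qq r (k+1)) ^ r := by ring
          _ = φm (Pk1 ^ r + Qq r (k+1) ^ r) := by rw [gk1, map_add, map_pow, map_pow]
          _ = φm c * φm Pk := by rw [hc, map_mul]; ring
      · -- ¬ X 0 ∣ c
        intro hdc
        apply nd10
        refine prime_X0.dvd_of_dvd_pow (n := r) ?_
        have hd : X 0 ∣ Pk1 ^ r + Qq r (k+1) ^ r := hc ▸ hdc.mul_left Pk
        have hq : (X 0 : MvPolynomial (Fin 2) ℝ) ∣ Qq r (k+1) ^ r := by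
          apply dvd_pow _ hr0
          rw [Qq]
          exact dvd_mul_of_dvd_left (dvd_pow_self _ (by have := Aexp_pos r hr (k+1); omega)) _
        have := dvd_sub hd hq
        simpa using this
      · intro hdc
        apply nd11
        refine prime_X1.dvd_of_dvd_pow (n := r) ?_
        have hd : X 1 ∣ Pk1 ^ r + Qq r (k+1) ^ r := hc ▸ hdc.mul_left Pk
        have hq : (X 1 : MvPolynomial (Fin 2) ℝ) ∣ Qq r (k+1) ^ r := by
          apply dvd_pow _ hr0
          rw [Qq]
          exact dvd_mul_of_dvd_right (dvd_pow_self _ (by have := Bexp_pos r hr k; omega)) _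
        have := dvd_sub hd hq
        simpa using this

end Main

end AuxEntropy

/-- For `f m = (f (m-1)^r + 1) / f (m-2)` with `r ≥ 3`, the monomial
denominators `q m` of the Laurent iterates satisfy `q (m) * q (m-2) = q (m-1)^r` with
`q 2 = X`, `q 3 = X^r * Y`, so the degrees grow like `λ^m` with
`λ = (r + √(r² - 4))/2`; hence the algebraic entropy equals `log λ > 0`. -/
theorem positive_entropy_of_superquadratic_recurrence
    (r : ℕ) (hr : 3 ≤ r)
    (x y : FractionRing (MvPolynomial (Fin 2) ℝ))
    (hx : x = algebraMap (MvPolynomial (Fin 2) ℝ) _ (X 0))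
    (hy : y = algebraMap (MvPolynomial (Fin 2) ℝ) _ (X 1))
    (f : ℕ → FractionRing (MvPolynomial (Fin 2) ℝ))
    (h0 : f 0 = x) (h1 : f 1 = y)
    (hne : ∀ m, f m ≠ 0)
    (hrec : ∀ m, f (m + 2) * f m = f (m + 1) ^ r + 1) :
    ∃ p q : ℕ → MvPolynomial (Fin 2) ℝ,
      (∀ m, 2 ≤ m → ¬ (X 0 ∣ p m) ∧ ¬ (X 1 ∣ p m) ∧
        f m * algebraMap (MvPolynomial (Fin 2) ℝ) _ (q m)
          = algebraMap (MvPolynomial (Fin 2) ℝ) _ (p m)) ∧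
      q 2 = X 0 ∧ q 3 = X 0 ^ r * X 1 ∧
      (∀ m, q (m + 4) * q (m + 2) = q (m + 3) ^ r) ∧
      Filter.Tendsto
        (fun m : ℕ => Real.log ((p m).totalDegree : ℝ) / m)
        Filter.atTop
        (nhds (Real.log (((r : ℝ) + Real.sqrt ((r : ℝ) ^ 2 - 4)) / 2))) ∧
      0 < Real.log (((r : ℝ) + Real.sqrt ((r : ℝ) ^ 2 - 4)) / 2) := by
  subst hx hy
  have hr0 : r ≠ 0 := by omega
  have g := main_exists hr f h0 h1 hne hrec
  set Pc : ℕ → MvPolynomial (Fin 2) ℝ := fun n => (g n).choose with hPc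
  have gspec : ∀ n, f (n + 2) * φm (Qq r n) = φm (Pc n) ∧ ¬ X 0 ∣ Pc n ∧ ¬ X 1 ∣ Pc n :=
    fun n => (g n).choose_spec
  -- identify the first two
  have e0 : Pc 0 = X 1 ^ r + 1 :=
    phi_inj (by rw [← (gspec 0).1, base0 hr f h0 h1 hne hrec])
  have e1 : Pc 1 = (X 1 ^ r + 1) ^ r + X 0 ^ r :=
    phi_inj (by rw [← (gspec 1).1, base1 hr f h0 h1 hne hrec])
  have hone_ne : (X 1 ^ r + 1 : MvPolynomial (Fin 2) ℝ) ≠ 0 := by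
    intro h
    have := congrArg (eval (fun _ : Fin 2 => (0:ℝ))) h
    simp [zero_pow hr0] at this
  have hPc_ne : ∀ n, Pc n ≠ 0 := by
    intro n h
    have := (gspec n).1
    rw [h, map_zero] at this
    exact (mul_ne_zero (hne _) (phi_ne_zero (Qq_ne_zero r n))) this
  -- degrees of Pc 0 and Pc 1
  have hd0 : (Pc 0).totalDegree = r := by
    rw [e0, totalDegree_add_eq_left_of_totalDegree_lt, totalDegree_X_pow]
    rw [totalDegree_X_pow, totalDegree_one]
    omega
  have hd1 : (Pc 1).totalDegree = r * r := by
    have hpr : ((X 1 ^ r + 1 : MvPolynomial (Fin 2) ℝ) ^ r).totalDegree = r * r := by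
      rw [totalDegree_pow_eq' hone_ne]
      rw [totalDegree_add_eq_left_of_totalDegree_lt, totalDegree_X_pow]
      rw [totalDegree_X_pow, totalDegree_one]; omega
    rw [e1, totalDegree_add_eq_left_of_totalDegree_lt, hpr]
    rw [hpr, totalDegree_X_pow]
    nlinarith
  -- degree of Qq
  have qdeg : ∀ n, (Qq r n).totalDegree = Aexp r n + Bexp r n := by
    intro n
    rw [Qq, totalDegree_mul_eq' (pow_ne_zero _ (X_ne_zero _)) (pow_ne_zero _ (X_ne_zero _)),
      totalDegree_X_pow, totalDegree_X_pow]
  have qdeg_rec : ∀ n, (Qq r (n+2)).totalDegree + (Qq r n).totalDegree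
      = r * (Qq r (n+1)).totalDegree := by
    intro n
    have hma := Aexp_rec r hr n
    have hmb := Bexp_rec r hr n
    have hmul : r * (Aexp r (n+1) + Bexp r (n+1))
        = r * Aexp r (n+1) + r * Bexp r (n+1) := Nat.mul_add _ _ _
    rw [qdeg, qdeg, qdeg]
    omega
  -- the ring recurrence for Pc
  have hRel : ∀ n, Pc (n + 2) * Pc n = Pc (n + 1) ^ r + Qq r (n + 1) ^ r := by
    intro n
    exact rel_of_good hr f h0 h1 hne hrec (gspec n).1 (gspec (n+1)).1 (gspec (n+2)).1
  -- denominator degree < numerator degree, and the degree recurrence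
  have key : ∀ n, ((Qq r n).totalDegree < (Pc n).totalDegree ∧
      (Qq r (n+1)).totalDegree < (Pc (n+1)).totalDegree) ∧
      (Pc n).totalDegree + (Qq r (n+1)).totalDegree
        ≤ (Pc (n+1)).totalDegree + (Qq r n).totalDegree := by
    have hdeg_step : ∀ n, (Qq r (n+1)).totalDegree < (Pc (n+1)).totalDegree →
        (Pc (n+2)).totalDegree + (Pc n).totalDegree = r * (Pc (n+1)).totalDegree := by
      intro n hlt
      have hlhs : (Pc (n+2) * Pc n).totalDegree
          = (Pc (n+2)).totalDegree + (Pc n).totalDegree :=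
        totalDegree_mul_eq' (hPc_ne _) (hPc_ne _)
      have hq : ((Qq r (n+1)) ^ r).totalDegree = r * (Qq r (n+1)).totalDegree :=
        totalDegree_pow_eq' (Qq_ne_zero r (n+1)) r
      have hp : ((Pc (n+1)) ^ r).totalDegree = r * (Pc (n+1)).totalDegree :=
        totalDegree_pow_eq' (hPc_ne _) r
      have hltpow : ((Qq r (n+1)) ^ r).totalDegree < ((Pc (n+1)) ^ r).totalDegree := by
        rw [hq, hp]
        exact mul_lt_mul_of_pos_left hlt (by omega : (0:ℕ) < r)
      have := totalDegree_add_eq_left_of_totalDegree_lt hltpow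
      rw [← hlhs, hRel n, this, hp]
    intro n
    induction n with
    | zero =>
      constructor
      · constructor
        · rw [hd0, qdeg, Aexp_zero, Bexp_zero]; omega
        · rw [hd1, qdeg, Aexp_one, Bexp_one]; nlinarith
      · rw [hd0, hd1, qdeg, qdeg, Aexp_zero, Bexp_zero, Aexp_one, Bexp_one]
        nlinarith
    | succ n ih =>
      obtain ⟨⟨ih1, ih2⟩, ih3⟩ := ih
      have hPrec := hdeg_step n ih2
      have hQrec := qdeg_rec n
      set dP1 := (Pc (n+1)).totalDegree
      set dQ1 := (Qq r (n+1)).totalDegree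
      have hsplit : r * dP1 = r * dQ1 + r * (dP1 - dQ1) := by
        have h1' : dQ1 + (dP1 - dQ1) = dP1 := by omega
        calc r * dP1 = r * (dQ1 + (dP1 - dQ1)) := by rw [h1']
          _ = r * dQ1 + r * (dP1 - dQ1) := Nat.mul_add _ _ _
      have hge : 3 * (dP1 - dQ1) ≤ r * (dP1 - dQ1) := Nat.mul_le_mul_right _ hr
      have hnn : n + 1 + 1 = n + 2 := rfl
      rw [hnn]
      refine ⟨⟨ih2, ?_⟩, ?_⟩ <;> omega
  have hDrec : ∀ n : ℕ, (fun m => (Pc (m - 2)).totalDegree) (n + 4)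
      + (fun m => (Pc (m - 2)).totalDegree) (n + 2)
      = r * (fun m => (Pc (m - 2)).totalDegree) (n + 3) := by
    intro n
    show (Pc (n + 4 - 2)).totalDegree + (Pc (n + 2 - 2)).totalDegree
      = r * (Pc (n + 3 - 2)).totalDegree
    have e4 : n + 4 - 2 = n + 2 := by omega
    have e2 : n + 2 - 2 = n := by omega
    have e3 : n + 3 - 2 = n + 1 := by omega
    rw [e4, e2, e3]
    have ih2 := ((key (n+1)).1).1
    have hlhs : (Pc (n+2) * Pc n).totalDegree
        = (Pc (n+2)).totalDegree + (Pc n).totalDegree :=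
      totalDegree_mul_eq' (hPc_ne _) (hPc_ne _)
    have hq : ((Qq r (n+1)) ^ r).totalDegree = r * (Qq r (n+1)).totalDegree :=
      totalDegree_pow_eq' (Qq_ne_zero r (n+1)) r
    have hp : ((Pc (n+1)) ^ r).totalDegree = r * (Pc (n+1)).totalDegree :=
      totalDegree_pow_eq' (hPc_ne _) r
    have hltpow : ((Qq r (n+1)) ^ r).totalDegree < ((Pc (n+1)) ^ r).totalDegree := by
      rw [hq, hp]
      exact mul_lt_mul_of_pos_left ih2 (by omega)
    have hadd := totalDegree_add_eq_left_of_totalDegree_lt hltpow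
    rw [← hlhs, hRel n, hadd, hp]
  have hEL := entropy_limit r hr (fun m => (Pc (m - 2)).totalDegree)
    hd0 (by show (Pc 1).totalDegree = r ^ 2; rw [hd1]; ring) hDrec
  -- package for entropy_limit
  refine ⟨fun m => Pc (m - 2), fun m => Qq r (m - 2), ?_, ?_, ?_, ?_, ?_, ?_⟩
  · intro m hm
    have hm2 : m - 2 + 2 = m := by omega
    have := gspec (m - 2)
    rw [hm2] at this
    exact ⟨this.2.1, this.2.2, this.1⟩
  · exact Qq_zero r
  · exact Qq_one r
  · intro m
    have e4 : m + 4 - 2 = m + 2 := by omega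
    have e2 : m + 2 - 2 = m := by omega
    have e3 : m + 3 - 2 = m + 1 := by omega
    show Qq r (m + 4 - 2) * Qq r (m + 2 - 2) = Qq r (m + 3 - 2) ^ r
    rw [e4, e2, e3]
    exact Qq_rec r hr m
  · exact hEL.1
  · exact hEL.2
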